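/- Let R be a unital associative algebra over ℝ, and let B₀, B₁ ∈ R satisfy B₀² = 1 and B₁² = 1. For t ∈ ℝ set B(t) = (1 − t)B₀ + tB₁. Then for every t ∈ ℝ: (i) (B₀ + B₁)·B(t) = B(1 − t)·(B₀ + B₁); and (ii) (B₀ + B₁)² commutes with B(t), i.e., (B₀ + B₁)²·B(t) = B(t)·(B₀ + B₁)². -/
import Mathlib

/-- Let `B₀, B₁` be involutions in a unital associative `ℝ`-algebra and
`B t = (1 - t) • B₀ + t • B₁`.  Then `(B₀ + B₁) * B t = B (1 - t) * (B₀ + B₁)` and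
`(B₀ + B₁)²` commutes with `B t`. -/
theorem involution_path_intertwining {R : Type*} [Ring R] [Algebra ℝ R]
    (B₀ B₁ : R) (h₀ : B₀ * B₀ = 1) (h₁ : B₁ * B₁ = 1)
    (B : ℝ → R) (hB : ∀ t : ℝ, B t = (1 - t) • B₀ + t • B₁) (t : ℝ) :
    (B₀ + B₁) * B t = B (1 - t) * (B₀ + B₁) ∧
      (B₀ + B₁) ^ 2 * B t = B t * (B₀ + B₁) ^ 2 := by
  have key : (B₀ + B₁) * B t = B (1 - t) * (B₀ + B₁) := by
    simp only [hB]
    simp only [mul_add, add_mul, mul_smul_comm, smul_mul_assoc, h₀, h₁,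
      sub_sub_cancel, smul_add]
    abel
  refine ⟨key, ?_⟩
  have key2 : (B₀ + B₁) * B (1 - t) = B (1 - (1 - t)) * (B₀ + B₁) := by
    simp only [hB]
    simp only [mul_add, add_mul, mul_smul_comm, smul_mul_assoc, h₀, h₁,
      sub_sub_cancel, smul_add]
    abel
  rw [sub_sub_cancel] at key2
  calc (B₀ + B₁) ^ 2 * B t = (B₀ + B₁) * ((B₀ + B₁) * B t) := by rw [sq, mul_assoc]
    _ = (B₀ + B₁) * (B (1 - t) * (B₀ + B₁)) := by rw [key]
    _ = ((B₀ + B₁) * B (1 - t)) * (B₀ + B₁) := by rw [mul_assoc]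
    _ = B t * (B₀ + B₁) ^ 2 := by rw [key2, sq, mul_assoc]
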